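/- arXiv:1310.7331 — 2 statements merged into one kernel-verified Lean document; each statement's English description precedes it below -/
import Mathlib

section
/- Let E be a finite-dimensional real inner product space and let μ : E → ℝ be positively homogeneous and convex (superadditive). If 0 does not belong to C_μ, then the supremum sup { μ(φ) : φ ∈ E, ‖φ‖ = 1 } is attained, and it is attained at a unique unit vector φ₀; that is, there exists a unique φ₀ ∈ E with ‖φ₀‖ = 1 such that μ(φ) ≤ μ(φ₀) for all unit vectors φ. -/
open RealInnerProductSpace

/-- For a positively homogeneous, superadditive function `μ` on a
finite-dimensional real inner product space `E`, if `0 ∉ C_μ` then the supremum of `μ`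
over the unit sphere is attained at a unique unit vector `φ₀`. -/
theorem exists_unique_maximizer_of_zero_not_mem_Cmu
    {E : Type*} [NormedAddCommGroup E] [InnerProductSpace ℝ E] [FiniteDimensional ℝ E]
    (μ : E → ℝ)
    (hhom : ∀ (φ : E) (t : ℝ), 0 ≤ t → μ (t • φ) = t * μ φ)
    (hconv : ∀ φ ψ : E, μ φ + μ ψ ≤ μ (φ + ψ))
    (h0 : (0 : E) ∉ {x : E | ∀ φ : E, μ φ ≤ ⟪φ, x⟫}) :
    ∃! φ₀ : E, ‖φ₀‖ = 1 ∧ ∀ φ : E, ‖φ‖ = 1 → μ φ ≤ μ φ₀ := by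
  -- there is some φ₁ with μ φ₁ > 0
  simp only [Set.mem_setOf_eq, not_forall, not_le] at h0
  obtain ⟨φ₁, hφ₁⟩ := h0
  rw [inner_zero_right] at hφ₁
  have hμ0 : μ 0 = 0 := by
    have := hhom 0 0 le_rfl; simpa using this
  have hφ₁ne : φ₁ ≠ 0 := by rintro rfl; rw [hμ0] at hφ₁; exact lt_irrefl 0 hφ₁
  -- μ is concave, hence continuous
  have hconc : ConcaveOn ℝ Set.univ μ := by
    refine ⟨convex_univ, fun x _ y _ a b ha hb _ => ?_⟩
    calc a * μ x + b * μ y = μ (a • x) + μ (b • y) := by rw [hhom x a ha, hhom y b hb]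
    _ ≤ μ (a • x + b • y) := hconv _ _
  have hcont : Continuous μ := by
    rw [← continuousOn_univ]
    exact hconc.continuousOn isOpen_univ
  -- sphere is compact and nonempty
  have hsc : IsCompact (Metric.sphere (0 : E) 1) := isCompact_sphere 0 1
  have hsne : (Metric.sphere (0 : E) 1).Nonempty := by
    refine ⟨‖φ₁‖⁻¹ • φ₁, ?_⟩
    simp [norm_smul, norm_ne_zero_iff.mpr hφ₁ne, inv_mul_cancel₀ (norm_ne_zero_iff.mpr hφ₁ne)]
  obtain ⟨φ₀, hφ₀mem, hφ₀max⟩ := hsc.exists_isMaxOn hsne (hcont.continuousOn)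
  have hφ₀norm : ‖φ₀‖ = 1 := by simpa using hφ₀mem
  have hmax : ∀ φ : E, ‖φ‖ = 1 → μ φ ≤ μ φ₀ := by
    intro φ hφ
    exact hφ₀max (by simpa using hφ)
  -- max value is positive
  have hpos : 0 < μ φ₀ := by
    have h1 : ‖φ₁‖ ≠ 0 := norm_ne_zero_iff.mpr hφ₁ne
    have := hmax (‖φ₁‖⁻¹ • φ₁) (by simp [norm_smul, inv_mul_cancel₀ h1])
    rw [hhom φ₁ ‖φ₁‖⁻¹ (by positivity)] at this
    have : 0 < ‖φ₁‖⁻¹ * μ φ₁ := by positivity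
    linarith [hmax (‖φ₁‖⁻¹ • φ₁) (by simp [norm_smul, inv_mul_cancel₀ h1]),
      hhom φ₁ ‖φ₁‖⁻¹ (by positivity)]
  refine ⟨φ₀, ⟨hφ₀norm, hmax⟩, ?_⟩
  rintro ψ ⟨hψnorm, hψmax⟩
  by_contra hne
  -- ψ and φ₀ both maximize; use strict convexity of the norm
  have hMψ : μ ψ = μ φ₀ := le_antisymm (hmax ψ hψnorm) (hψmax φ₀ hφ₀norm)
  set s := ψ + φ₀ with hs
  have hinner : ⟪ψ, φ₀⟫ < 1 := by
    rcases lt_or_eq_of_le ((real_inner_le_norm ψ φ₀).trans_eq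
      (by rw [hψnorm, hφ₀norm, mul_one])) with h | h
    · exact h
    · exact absurd ((inner_eq_one_iff_of_norm_eq_one hψnorm hφ₀norm).mp h) hne
  have hslt : ‖s‖ < 2 := by
    have h2 : ‖s‖ ^ 2 < 2 ^ 2 := by
      rw [hs, ← real_inner_self_eq_norm_sq]
      have := real_inner_self_eq_norm_sq ψ
      have := real_inner_self_eq_norm_sq φ₀
      rw [inner_add_add_self]
      rw [real_inner_self_eq_norm_sq, real_inner_self_eq_norm_sq, hψnorm, hφ₀norm,
        real_inner_comm φ₀ ψ] at *
      nlinarith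
    nlinarith [norm_nonneg s]
  have hμs : 2 * μ φ₀ ≤ μ s := by
    have := hconv ψ φ₀; rw [hMψ] at this; linarith
  have hsns : s ≠ 0 := by
    intro h
    rw [h, hμ0] at hμs; linarith
  have hns : ‖s‖ ≠ 0 := norm_ne_zero_iff.mpr hsns
  have hles : μ (‖s‖⁻¹ • s) ≤ μ φ₀ := hmax _ (by simp [norm_smul, inv_mul_cancel₀ hns])
  rw [hhom s ‖s‖⁻¹ (by positivity)] at hles
  have hspos : 0 < ‖s‖ := lt_of_le_of_ne (norm_nonneg s) (Ne.symm hns)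
  have : 2 * μ φ₀ ≤ ‖s‖ * μ φ₀ := by
    calc 2 * μ φ₀ ≤ μ s := hμs
    _ = ‖s‖ * (‖s‖⁻¹ * μ s) := by field_simp
    _ ≤ ‖s‖ * μ φ₀ := by nlinarith
  nlinarith
end

section
/- Let E be a finite-dimensional real inner product space and let μ : E → ℝ be positively homogeneous and convex (superadditive), with 0 ∉ C_μ. Let x₀ denote the orthogonal (metric) projection of 0 onto the nonempty closed convex set C_μ, i.e. the unique point of C_μ nearest to 0. Then the unique unit vector φ₀ maximizing μ over the unit sphere is φ₀ = x₀ / ‖x₀‖, and μ(φ₀) = ‖x₀‖ = dist(0, C_μ), the distance from 0 to C_μ. -/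
open RealInnerProductSpace

/-- Suppose `μ` is positively homogeneous and superadditive with `0 ∉ C_μ`,
and let `x₀` be the orthogonal projection of `0` onto `C_μ` (the point of `C_μ` nearest
to `0`). Then `φ₀ = x₀ / ‖x₀‖` is the unique unit vector maximizing `μ` over the unit
sphere, and `μ φ₀ = ‖x₀‖ = dist(0, C_μ)`. -/
theorem maximizer_eq_normalized_projection
    {E : Type*} [NormedAddCommGroup E] [InnerProductSpace ℝ E] [FiniteDimensional ℝ E]
    (μ : E → ℝ)
    (hhom : ∀ (φ : E) (t : ℝ), 0 ≤ t → μ (t • φ) = t * μ φ)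
    (hconv : ∀ φ ψ : E, μ φ + μ ψ ≤ μ (φ + ψ))
    (h0 : (0 : E) ∉ {x : E | ∀ φ : E, μ φ ≤ ⟪φ, x⟫})
    (x₀ : E) (hx₀ : x₀ ∈ {x : E | ∀ φ : E, μ φ ≤ ⟪φ, x⟫})
    (hnear : ∀ y ∈ {x : E | ∀ φ : E, μ φ ≤ ⟪φ, x⟫}, dist (0 : E) x₀ ≤ dist (0 : E) y) :
    (‖(‖x₀‖⁻¹ • x₀ : E)‖ = 1 ∧ ∀ φ : E, ‖φ‖ = 1 → μ φ ≤ μ (‖x₀‖⁻¹ • x₀)) ∧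
      (∀ φ : E, ‖φ‖ = 1 → (∀ ψ : E, ‖ψ‖ = 1 → μ ψ ≤ μ φ) → φ = ‖x₀‖⁻¹ • x₀) ∧
      μ (‖x₀‖⁻¹ • x₀) = ‖x₀‖ ∧
      ‖x₀‖ = Metric.infDist (0 : E) {x : E | ∀ φ : E, μ φ ≤ ⟪φ, x⟫} := by
  set C : Set E := {x : E | ∀ φ : E, μ φ ≤ ⟪φ, x⟫} with hCdef
  have hx0ne : x₀ ≠ 0 := fun h => h0 (h ▸ hx₀)
  have hnx : (0 : ℝ) < ‖x₀‖ := norm_pos_iff.mpr hx0ne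
  have hmu0 : μ 0 = 0 := by simpa using hhom 0 0 le_rfl
  have hopp : ∀ φ : E, μ φ + μ (-φ) ≤ 0 := fun φ => by
    have := hconv φ (-φ); simpa [hmu0] using this
  -- Step 1: variational inequality for the nearest point
  have hvar : ∀ y ∈ C, ‖x₀‖ ^ 2 ≤ ⟪x₀, y⟫ := by
    intro y hy
    by_contra hlt
    push_neg at hlt
    set d : E := y - x₀ with hd
    have ha : ⟪x₀, d⟫ < 0 := by
      have : ⟪x₀, d⟫ = ⟪x₀, y⟫ - ‖x₀‖ ^ 2 := by
        rw [hd, inner_sub_right, real_inner_self_eq_norm_sq]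
      linarith
    have hbpos : (0 : ℝ) < ‖d‖ ^ 2 := by
      have hdne : d ≠ 0 := by
        intro h
        rw [h, inner_zero_right] at ha
        exact lt_irrefl 0 ha
      exact pow_pos (norm_pos_iff.mpr hdne) 2
    set a : ℝ := ⟪x₀, d⟫
    set b : ℝ := ‖d‖ ^ 2
    set t : ℝ := min 1 (-a / b) with ht
    have htpos : 0 < t := lt_min one_pos (div_pos (by linarith) hbpos)
    have ht1 : t ≤ 1 := min_le_left _ _
    have htb : t * b ≤ -a := by
      have : t ≤ -a / b := min_le_right _ _
      calc t * b ≤ (-a / b) * b := by nlinarith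
        _ = -a := by field_simp
    -- the point x₀ + t • d lies in C
    have hmem : x₀ + t • d ∈ C := by
      intro φ
      have h1 : μ φ ≤ ⟪φ, x₀⟫ := hx₀ φ
      have h2 : μ φ ≤ ⟪φ, y⟫ := hy φ
      have : ⟪φ, x₀ + t • d⟫ = (1 - t) * ⟪φ, x₀⟫ + t * ⟪φ, y⟫ := by
        rw [inner_add_right, real_inner_smul_right, hd, inner_sub_right]
        ring
      rw [this]
      nlinarith
    have hle : ‖x₀‖ ≤ ‖x₀ + t • d‖ := by
      have := hnear _ hmem
      simpa [dist_zero_left] using this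
    have hsq : ‖x₀ + t • d‖ ^ 2 = ‖x₀‖ ^ 2 + 2 * (t * a) + t ^ 2 * b := by
      rw [norm_add_sq_real, real_inner_smul_right, norm_smul, Real.norm_eq_abs,
        abs_of_pos htpos]
      ring
    have h2 : ‖x₀‖ ^ 2 ≤ ‖x₀ + t • d‖ ^ 2 := by nlinarith [norm_nonneg (x₀ + t • d)]
    nlinarith
  -- Step 2: Hahn-Banach gives x ∈ C with ⟪x₀, x⟫ = μ x₀
  have hkey : μ x₀ = ‖x₀‖ ^ 2 := by
    obtain ⟨g, hg1, hg2⟩ :=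
      exists_extension_of_le_sublinear (LinearPMap.mkSpanSingleton x₀ (μ x₀) hx0ne)
        (fun φ => -μ (-φ))
        (fun c hc x => by
          show -μ (-(c • x)) = c * -μ (-x)
          rw [← smul_neg, hhom (-x) c hc.le]; ring)
        (fun x y => by
          show -μ (-(x + y)) ≤ -μ (-x) + -μ (-y)
          have := hconv (-x) (-y)
          rw [(neg_add x y).symm] at this
          linarith)
        (by
          rintro ⟨v, hv⟩
          have hv' : v ∈ Submodule.span ℝ {x₀} := hv
          rw [Submodule.mem_span_singleton] at hv'
          obtain ⟨c, rfl⟩ := hv'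
          show (LinearPMap.mkSpanSingleton x₀ (μ x₀) hx0ne) ⟨c • x₀, hv⟩ ≤ -μ (-(c • x₀))
          rw [LinearPMap.mkSpanSingleton'_apply]
          rcases le_or_gt 0 c with hc | hc
          · have h1 : μ (-(c • x₀)) = c * μ (-x₀) := by
              rw [← smul_neg]; exact hhom (-x₀) c hc
            have := hopp x₀
            simp only [smul_eq_mul, RingHom.id_apply, h1]
            nlinarith
          · have h1 : μ (-(c • x₀)) = -c * μ x₀ := by
              have : -(c • x₀) = (-c) • x₀ := by simp
              rw [this]; exact hhom x₀ (-c) (by linarith)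
            simp only [smul_eq_mul, RingHom.id_apply, h1]
            linarith)
    have hgx₀ : g x₀ = μ x₀ := by
      have := hg1 ⟨x₀, Submodule.mem_span_singleton_self x₀⟩
      rwa [LinearPMap.mkSpanSingleton_apply] at this
    -- represent g by a vector via Riesz
    set x : E := (InnerProductSpace.toDual ℝ E).symm (LinearMap.toContinuousLinearMap g) with hx
    have hrep : ∀ φ : E, ⟪x, φ⟫ = g φ := fun φ => by
      rw [hx, InnerProductSpace.toDual_symm_apply]; rfl
    have hxC : x ∈ C := fun φ => by
      have h2 : μ φ ≤ g φ := by
        have := hg2 (-φ)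
        rw [neg_neg, map_neg] at this
        linarith
      calc μ φ ≤ g φ := h2
        _ = ⟪φ, x⟫ := by rw [← hrep φ, real_inner_comm]
    have h3 : ‖x₀‖ ^ 2 ≤ ⟪x₀, x⟫ := hvar x hxC
    have h4 : ⟪x₀, x⟫ = μ x₀ := by rw [real_inner_comm, hrep, hgx₀]
    have h5 : μ x₀ ≤ ‖x₀‖ ^ 2 := by
      have := hx₀ x₀
      rwa [real_inner_self_eq_norm_sq] at this
    linarith
  have hmuphi : μ (‖x₀‖⁻¹ • x₀) = ‖x₀‖ := by
    rw [hhom x₀ _ (by positivity), hkey]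
    field_simp
  have hub : ∀ φ : E, ‖φ‖ = 1 → μ φ ≤ ‖x₀‖ := fun φ hφ => by
    calc μ φ ≤ ⟪φ, x₀⟫ := hx₀ φ
      _ ≤ ‖φ‖ * ‖x₀‖ := real_inner_le_norm φ x₀
      _ = ‖x₀‖ := by rw [hφ, one_mul]
  have hnorm1 : ‖(‖x₀‖⁻¹ • x₀ : E)‖ = 1 := by
    rw [norm_smul, norm_inv, norm_norm]; field_simp
  refine ⟨⟨hnorm1, fun φ hφ => by rw [hmuphi]; exact hub φ hφ⟩, ?_, hmuphi, ?_⟩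
  · -- uniqueness
    intro φ hφ hmax
    have h1 : ‖x₀‖ ≤ μ φ := by
      have := hmax _ hnorm1
      rwa [hmuphi] at this
    have h2 : ⟪φ, x₀⟫ = ‖φ‖ * ‖x₀‖ := by
      have := hx₀ φ
      have h3 := real_inner_le_norm φ x₀
      rw [hφ, one_mul] at h3 ⊢
      linarith
    have := inner_eq_norm_mul_iff_real.mp h2
    rw [hφ, one_smul] at this
    exact ((inv_smul_eq_iff₀ (ne_of_gt hnx)).mpr this.symm).symm
  · -- infDist
    refine le_antisymm ?_ ?_
    · by_contra hlt
      push_neg at hlt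
      obtain ⟨y, hy, hdy⟩ := (Metric.infDist_lt_iff ⟨x₀, hx₀⟩).mp hlt
      have := hnear y hy
      rw [dist_zero_left, dist_zero_left] at this
      rw [dist_zero_left] at hdy
      linarith
    · have := Metric.infDist_le_dist_of_mem (x := (0:E)) hx₀
      rwa [dist_zero_left] at this
end
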